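/- arXiv:1902.00126 — 3 statements merged into one kernel-verified Lean document; each statement's English description precedes it below -/
import Mathlib

section
/- Let g : H → ℝ be convex and L_g-Lipschitz continuous. Then for every β > 0 and every z, the Nesterov smoothing g_β(z) = sup_u (⟨u,z⟩ - g*(u) - (β/2)‖u‖²) satisfies g_β(z) ≤ g(z) ≤ g_β(z) + (β/2)L_g². -/
open RealInnerProductSpace

/-- Existence of a subgradient for a convex continuous function on a Hilbert space. -/
lemma exists_subgradient
    {H : Type*} [NormedAddCommGroup H] [InnerProductSpace ℝ H] [CompleteSpace H]
    (g : H → ℝ) (hgconv : ConvexOn ℝ Set.univ g) (hgc : Continuous g) (z : H) :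
    ∃ u : H, ∀ w : H, ⟪u, w - z⟫ ≤ g w - g z := by
  set E : Set (H × ℝ) := {p : H × ℝ | g p.1 < p.2} with hE
  have hEconv : Convex ℝ E := by
    rintro ⟨x, a⟩ hx ⟨y, b⟩ hy s t hs ht hst
    simp only [hE, Set.mem_setOf_eq] at *
    calc g (s • x + t • y) ≤ s * g x + t * g y :=
          hgconv.2 (Set.mem_univ x) (Set.mem_univ y) hs ht hst
      _ < s * a + t * b := by
          rcases hs.eq_or_lt with rfl | hs'
          · have ht1 : t = 1 := by linarith
            subst ht1; nlinarith
          · nlinarith [mul_lt_mul_of_pos_left hx hs', mul_le_mul_of_nonneg_left hy.le ht]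
  have hEopen : IsOpen E := by
    have : Continuous fun p : H × ℝ => g p.1 - p.2 :=
      (hgc.comp continuous_fst).sub continuous_snd
    have : IsOpen {p : H × ℝ | g p.1 - p.2 < 0} := isOpen_lt this continuous_const
    convert this using 1
    ext p; simp [hE, sub_neg]
  have hz : (z, g z) ∉ E := by simp [hE]
  obtain ⟨f, hf⟩ := geometric_hahn_banach_point_open hEconv hEopen hz
  -- decompose f
  set c : ℝ := f (0, 1) with hc
  set ℓ : H →L[ℝ] ℝ := f.comp (ContinuousLinearMap.inl ℝ H ℝ) with hℓ
  have hdecomp : ∀ (w : H) (t : ℝ), f (w, t) = ℓ w + t * c := by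
    intro w t
    have : (w, t) = (w, (0:ℝ)) + t • ((0:H), (1:ℝ)) := by
      simp [Prod.ext_iff]
    rw [this, map_add, map_smul]
    simp [hℓ, hc, smul_eq_mul, mul_comm]
  -- key inequality: for all w, t with g w < t, f (z, g z) < ℓ w + t * c
  have key : ∀ (w : H) (t : ℝ), g w < t → ℓ z + g z * c < ℓ w + t * c := by
    intro w t hwt
    have := hf (w, t) hwt
    rwa [hdecomp, hdecomp] at this
  have hcpos : 0 < c := by
    have h1 := key z (g z + 1) (by linarith)
    nlinarith
  -- subgradient inequality: for all w, ℓ z + g z * c ≤ ℓ w + g w * c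
  have hsub : ∀ w : H, ℓ z + g z * c ≤ ℓ w + g w * c := by
    intro w
    by_contra hlt
    push_neg at hlt
    -- choose t slightly above g w
    set ε : ℝ := (ℓ z + g z * c - (ℓ w + g w * c)) / c with hε
    have hεpos : 0 < ε := div_pos (by linarith) hcpos
    have := key w (g w + ε) (by linarith)
    have : ℓ z + g z * c < ℓ w + g w * c + ε * c := by
      rw [add_mul] at this; linarith
    rw [hε, div_mul_cancel₀ _ (ne_of_gt hcpos)] at this
    linarith
  -- define u via Riesz representation of -(1/c) • ℓ
  set φ : H →L[ℝ] ℝ := (-(1/c)) • ℓ with hφ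
  refine ⟨(InnerProductSpace.toDual ℝ H).symm φ, fun w => ?_⟩
  have hu : ∀ v : H, ⟪(InnerProductSpace.toDual ℝ H).symm φ, v⟫ = φ v := fun v =>
    InnerProductSpace.toDual_symm_apply
  rw [inner_sub_right, hu, hu]
  have h1 := hsub w
  have hφw : φ w = -(1/c) * ℓ w := by simp [hφ]
  have hφz : φ z = -(1/c) * ℓ z := by simp [hφ]
  rw [hφw, hφz]
  have hcne : c ≠ 0 := ne_of_gt hcpos
  have hdiv : (ℓ z - ℓ w) / c ≤ g w - g z := by
    rw [div_le_iff₀ hcpos]; linarith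
  calc -(1/c) * ℓ w - -(1/c) * ℓ z = (ℓ z - ℓ w) / c := by field_simp; ring
    _ ≤ g w - g z := hdiv

/-- For a convex `L_g`-Lipschitz function `g`, the Nesterov smoothing
`g_β(z) = sup_u (⟪u,z⟫ - g*(u) - (β/2)‖u‖²)` (the supremum being over the
domain of the conjugate `g*`) satisfies `g_β(z) ≤ g(z) ≤ g_β(z) + (β/2)L_g²`. -/
theorem nesterov_smoothing_lipschitz_bounds
    {H : Type*} [NormedAddCommGroup H] [InnerProductSpace ℝ H] [CompleteSpace H]
    (g : H → ℝ) (hgconv : ConvexOn ℝ Set.univ g)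
    (Lg : ℝ) (hLg : 0 ≤ Lg) (hlip : ∀ x y : H, |g x - g y| ≤ Lg * ‖x - y‖)
    (β : ℝ) (hβ : 0 < β) (z : H)
    (gβ : ℝ)
    (hgβ : gβ = sSup {r : ℝ | ∃ u : H,
        BddAbove ((fun w => ⟪w, u⟫ - g w) '' Set.univ) ∧
        r = ⟪u, z⟫ - sSup ((fun w => ⟪w, u⟫ - g w) '' Set.univ) - β / 2 * ‖u‖ ^ 2}) :
    gβ ≤ g z ∧ g z ≤ gβ + β / 2 * Lg ^ 2 := by
  have hgc : Continuous g := by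
    apply (LipschitzWith.of_dist_le_mul (K := Lg.toNNReal) (f := g) ?_).continuous
    intro x y
    rw [Real.dist_eq, dist_eq_norm, Real.coe_toNNReal _ hLg]
    exact hlip x y
  obtain ⟨u₀, hu₀⟩ := exists_subgradient g hgconv hgc z
  have hub : ∀ w : H, ⟪w, u₀⟫ - g w ≤ ⟪z, u₀⟫ - g z := by
    intro w
    have := hu₀ w
    rw [inner_sub_right] at this
    rw [real_inner_comm u₀ w, real_inner_comm u₀ z]
    linarith
  have hmem0 : (⟪z, u₀⟫ - g z) ∈ upperBounds ((fun w => ⟪w, u₀⟫ - g w) '' Set.univ) := by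
    rintro r ⟨w, -, rfl⟩
    exact hub w
  have hbdd0 : BddAbove ((fun w => ⟪w, u₀⟫ - g w) '' Set.univ) := ⟨_, hmem0⟩
  have hsup0 : sSup ((fun w => ⟪w, u₀⟫ - g w) '' Set.univ) = ⟪z, u₀⟫ - g z := by
    apply le_antisymm
    · refine csSup_le ⟨⟪z, u₀⟫ - g z, ⟨z, Set.mem_univ z, rfl⟩⟩ ?_
      rintro r ⟨w, -, rfl⟩
      exact hub w
    · exact le_csSup hbdd0 ⟨z, Set.mem_univ z, rfl⟩
  have hnorm : ‖u₀‖ ≤ Lg := by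
    have h1 := hu₀ (z + u₀)
    rw [show z + u₀ - z = u₀ by abel, real_inner_self_eq_norm_sq] at h1
    have h2 : g (z + u₀) - g z ≤ Lg * ‖u₀‖ := by
      have := hlip (z + u₀) z
      rw [show z + u₀ - z = u₀ by abel] at this
      exact (le_abs_self _).trans this
    rcases eq_or_lt_of_le (norm_nonneg u₀) with h0 | h0
    · rw [← h0]; exact hLg
    · nlinarith
  set S := {r : ℝ | ∃ u : H,
        BddAbove ((fun w => ⟪w, u⟫ - g w) '' Set.univ) ∧
        r = ⟪u, z⟫ - sSup ((fun w => ⟪w, u⟫ - g w) '' Set.univ) - β / 2 * ‖u‖ ^ 2} with hS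
  set r₀ : ℝ := g z - β / 2 * ‖u₀‖ ^ 2 with hr₀
  have hr₀S : r₀ ∈ S := by
    refine ⟨u₀, hbdd0, ?_⟩
    rw [hsup0, real_inner_comm u₀ z]
    ring
  have hSle : ∀ r ∈ S, r ≤ g z := by
    rintro r ⟨u, hbdd, rfl⟩
    have h1 : ⟪z, u⟫ - g z ≤ sSup ((fun w => ⟪w, u⟫ - g w) '' Set.univ) :=
      le_csSup hbdd ⟨z, Set.mem_univ z, rfl⟩
    have h2 : 0 ≤ β / 2 * ‖u‖ ^ 2 := by positivity
    rw [real_inner_comm z u]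
    linarith
  have hSbdd : BddAbove S := ⟨g z, fun r hr => hSle r hr⟩
  constructor
  · rw [hgβ]
    exact csSup_le ⟨r₀, hr₀S⟩ hSle
  · have h1 : r₀ ≤ gβ := by
      rw [hgβ]
      exact le_csSup hSbdd hr₀S
    have h2 : β / 2 * ‖u₀‖ ^ 2 ≤ β / 2 * Lg ^ 2 := by
      have hp : 0 ≤ β / 2 * (Lg - ‖u₀‖) * (Lg + ‖u₀‖) :=
        mul_nonneg (mul_nonneg (by linarith) (by linarith)) (by positivity)
      nlinarith
    rw [hr₀] at h1
    linarith
end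

section
/- Three-point inequality for the proximal step: let h : H → ℝ ∪ {+∞} be proper convex lsc, α > 0, and let x⁺ = prox_{αh}(x - αd) for a given vector d. Then for every z: h(x⁺) + ⟨d, x⁺ - x⟩ ≤ h(z) + ⟨d, z - x⟩ + (1/(2α))‖z - x‖² - (1/(2α))‖z - x⁺‖² - (1/(2α))‖x⁺ - x‖². -/
open RealInnerProductSpace

open Filter Topology in
/-- Three-point inequality for the proximal step: if
`x⁺ = prox_{αh}(x - αd)`, i.e. `x⁺` minimizes `u ↦ α h(u) + ½‖u - (x - αd)‖²`,
then for every `z`,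
`h(x⁺) + ⟪d, x⁺ - x⟫ ≤ h(z) + ⟪d, z - x⟫ + 1/(2α)‖z-x‖² - 1/(2α)‖z-x⁺‖² - 1/(2α)‖x⁺-x‖²`. -/
theorem three_point_inequality_prox
    {H : Type*} [NormedAddCommGroup H] [InnerProductSpace ℝ H] [CompleteSpace H]
    (h : H → ℝ) (hconv : ConvexOn ℝ Set.univ h) (hlsc : LowerSemicontinuous h)
    (α : ℝ) (hα : 0 < α) (x d xplus : H)
    (hprox : IsMinOn (fun u => α * h u + 1 / 2 * ‖u - (x - α • d)‖ ^ 2)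
      Set.univ xplus) :
    ∀ z : H,
      h xplus + ⟪d, xplus - x⟫ ≤
        h z + ⟪d, z - x⟫ + 1 / (2 * α) * ‖z - x‖ ^ 2
          - 1 / (2 * α) * ‖z - xplus‖ ^ 2 - 1 / (2 * α) * ‖xplus - x‖ ^ 2 := by
  intro z
  set w := x - α • d with hw
  clear_value w
  -- key strong-convexity inequality
  have key : α * h xplus + 1/2 * ‖xplus - w‖^2 + 1/2 * ‖z - xplus‖^2
      ≤ α * h z + 1/2 * ‖z - w‖^2 := by
    have main : ∀ t : ℝ, 0 < t → t ≤ 1 →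
        α * h xplus + 1/2 * ‖xplus - w‖^2 + (1-t)/2 * ‖z - xplus‖^2
          ≤ α * h z + 1/2 * ‖z - w‖^2 := by
      intro t ht ht1
      have hmin := hprox (Set.mem_univ ((1-t) • xplus + t • z))
      simp only [Set.mem_setOf_eq] at hmin
      have hc := hconv.2 (Set.mem_univ xplus) (Set.mem_univ z)
        (by linarith : (0:ℝ) ≤ 1 - t) ht.le (by ring)
      simp only [smul_eq_mul] at hc
      have hc' := mul_le_mul_of_nonneg_left hc hα.le
      have hsplit : ((1-t) • xplus + t • z) - w = (1-t) • (xplus - w) + t • (z - w) := by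
        rw [smul_sub, smul_sub]
        have hww : (1-t) • w + t • w = w := by
          rw [← add_smul]; norm_num
        conv_lhs => rw [← hww]
        abel
      have hcombo : ∀ (a b : H) (s : ℝ), ‖(1-s) • a + s • b‖^2
          = (1-s) * ‖a‖^2 + s * ‖b‖^2 - s * (1-s) * ‖b - a‖^2 := by
        intro a b s
        rw [@norm_add_sq_real, @norm_sub_sq_real, real_inner_smul_left,
          real_inner_smul_right, real_inner_comm b a]
        simp only [norm_smul, Real.norm_eq_abs, mul_pow, sq_abs]
        ring
      have hn : ‖((1-t) • xplus + t • z) - w‖^2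
          = (1-t) * ‖xplus - w‖^2 + t * ‖z - w‖^2 - t * (1-t) * ‖z - xplus‖^2 := by
        rw [hsplit, hcombo]
        have e1 : (z - w) - (xplus - w) = z - xplus := by abel
        rw [e1]
      rw [hn] at hmin
      have h2 : t * (α * h xplus + 1/2 * ‖xplus - w‖^2 + (1-t)/2 * ‖z - xplus‖^2)
          ≤ t * (α * h z + 1/2 * ‖z - w‖^2) := by nlinarith [hmin, hc']
      exact le_of_mul_le_mul_left h2 ht
    have tend : Tendsto (fun t : ℝ =>
        α * h xplus + 1/2 * ‖xplus - w‖^2 + (1-t)/2 * ‖z - xplus‖^2) (𝓝[>] (0:ℝ))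
        (𝓝 (α * h xplus + 1/2 * ‖xplus - w‖^2 + 1/2 * ‖z - xplus‖^2)) := by
      have cont : Continuous (fun t : ℝ =>
          α * h xplus + 1/2 * ‖xplus - w‖^2 + (1-t)/2 * ‖z - xplus‖^2) := by continuity
      have := cont.tendsto 0
      simp only [sub_zero] at this
      exact this.mono_left nhdsWithin_le_nhds
    refine le_of_tendsto tend ?_
    have hmem : Set.Ioc (0:ℝ) 1 ∈ 𝓝[>] (0:ℝ) :=
      Ioc_mem_nhdsGT_of_mem ⟨le_refl 0, one_pos⟩
    filter_upwards [hmem] with t ht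
    exact main t ht.1 ht.2
  -- expand the norms involving w
  have expand1 : ‖xplus - w‖^2
      = ‖xplus - x‖^2 + 2*α*⟪d, xplus - x⟫ + α^2*‖d‖^2 := by
    have e : xplus - w = (xplus - x) + α • d := by rw [hw]; abel
    rw [e, @norm_add_sq_real, real_inner_smul_right, real_inner_comm]
    simp only [norm_smul, Real.norm_eq_abs, mul_pow, sq_abs]
    ring
  have expand2 : ‖z - w‖^2
      = ‖z - x‖^2 + 2*α*⟪d, z - x⟫ + α^2*‖d‖^2 := by
    have e : z - w = (z - x) + α • d := by rw [hw]; abel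
    rw [e, @norm_add_sq_real, real_inner_smul_right, real_inner_comm]
    simp only [norm_smul, Real.norm_eq_abs, mul_pow, sq_abs]
    ring
  rw [expand1, expand2] at key
  have H2 : (0:ℝ) < 2 * α := by positivity
  have hα' : α ≠ 0 := ne_of_gt hα
  rw [← mul_le_mul_iff_of_pos_right H2]
  field_simp
  nlinarith [key]
end

section
/- Let ω > 1, α₀ > 0, m₀ ≥ 2, α_s = α₀ ω^{-s/2}, m_s = ⌊m₀ ωˢ⌋, and M_S = Σ_{s=0}^S m_s. Then α_S m_S ≥ α₀ ((m₀-1)/√m₀)·(√(ω-1)/√ω)·√(M_S). -/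
/-- For `ω > 1`, `α₀ > 0`, `m₀ ≥ 2`, step sizes `α_s = α₀ ω^{-s/2}`,
inner-loop lengths `m_s = ⌊m₀ ωˢ⌋` and `M_S = Σ_{s=0}^S m_s`, one has
`α_S m_S ≥ α₀ ((m₀-1)/√m₀)·(√(ω-1)/√ω)·√M_S`. -/
theorem step_times_epoch_length_lower_bound
    (ω : ℝ) (hω : 1 < ω) (α₀ : ℝ) (hα₀ : 0 < α₀) (m₀ : ℕ) (hm₀ : 2 ≤ m₀)
    (α : ℕ → ℝ) (hα : ∀ s, α s = α₀ * ω ^ (-(s : ℝ) / 2))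
    (m : ℕ → ℕ) (hm : ∀ s, m s = ⌊(m₀ : ℝ) * ω ^ s⌋₊)
    (M : ℕ → ℕ) (hM : ∀ S, M S = ∑ s ∈ Finset.range (S + 1), m s) :
    ∀ S : ℕ,
      α₀ * (((m₀ : ℝ) - 1) / Real.sqrt m₀) * (Real.sqrt (ω - 1) / Real.sqrt ω) *
        Real.sqrt (M S) ≤ α S * (m S : ℝ) := by
  intro S
  have hω0 : (0:ℝ) < ω := lt_trans one_pos hω
  have hωS1 : (1:ℝ) ≤ ω ^ S := one_le_pow₀ hω.le
  set t := Real.sqrt (ω ^ S) with ht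
  have ht1 : 1 ≤ t := by
    rw [ht]
    have : Real.sqrt 1 ≤ Real.sqrt (ω ^ S) := Real.sqrt_le_sqrt hωS1
    simpa using this
  have ht0 : (0:ℝ) < t := lt_of_lt_of_le one_pos ht1
  have ht2 : t ^ 2 = ω ^ S := Real.sq_sqrt (by positivity)
  have hm2 : (2:ℝ) ≤ (m₀:ℝ) := by exact_mod_cast hm₀
  have hαS : α S = α₀ / t := by
    rw [hα S, ht, show (-(S:ℝ)/2) = -((S:ℝ)*(1/2)) by ring, Real.rpow_neg hω0.le,
      Real.rpow_mul hω0.le, Real.rpow_natCast, ← Real.sqrt_eq_rpow, ← div_eq_mul_inv]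
  have hmS : (m₀:ℝ) * ω ^ S - 1 ≤ (m S : ℝ) := by
    rw [hm S]
    have := Nat.lt_floor_add_one ((m₀:ℝ) * ω ^ S)
    push_cast at this ⊢
    linarith
  have hMS : (M S : ℝ) * (ω - 1) ≤ (m₀ : ℝ) * ω * ω ^ S := by
    have hsum : (M S : ℝ) ≤ (m₀:ℝ) * ((ω ^ (S+1) - 1)/(ω - 1)) := by
      rw [hM S]
      push_cast
      calc (∑ s ∈ Finset.range (S+1), ((m s : ℝ)))
          ≤ ∑ s ∈ Finset.range (S+1), (m₀:ℝ) * ω ^ s := by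
            apply Finset.sum_le_sum
            intro s _
            rw [hm s]
            exact Nat.floor_le (by positivity)
        _ = (m₀:ℝ) * ((ω ^ (S+1) - 1)/(ω - 1)) := by
            rw [← Finset.mul_sum, geom_sum_eq hω.ne']
    have hω1 : (0:ℝ) < ω - 1 := by linarith
    have h2 := mul_le_mul_of_nonneg_right hsum hω1.le
    have h3 : (m₀:ℝ) * ((ω ^ (S+1) - 1)/(ω - 1)) * (ω - 1) = (m₀:ℝ) * (ω ^ (S+1) - 1) := by
      field_simp
    have hpow : ω ^ (S+1) = ω * ω ^ S := by ring
    rw [h3] at h2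
    nlinarith [pow_pos hω0 S]
  have hkey : Real.sqrt (M S : ℝ) * Real.sqrt (ω - 1) ≤ Real.sqrt m₀ * Real.sqrt ω * t := by
    rw [ht, ← Real.sqrt_mul (Nat.cast_nonneg _), ← Real.sqrt_mul (Nat.cast_nonneg _),
        ← Real.sqrt_mul (by positivity : (0:ℝ) ≤ (m₀:ℝ) * ω)]
    exact Real.sqrt_le_sqrt hMS
  have hb : (0:ℝ) < Real.sqrt m₀ * Real.sqrt ω := by
    have : (0:ℝ) < (m₀:ℝ) := by linarith
    positivity
  have hstep1 : α₀ * (((m₀:ℝ) - 1)/Real.sqrt m₀) * (Real.sqrt (ω-1)/Real.sqrt ω) *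
      Real.sqrt (M S) ≤ α₀ * ((m₀:ℝ) - 1) * t := by
    have heq : α₀ * (((m₀:ℝ) - 1)/Real.sqrt m₀) * (Real.sqrt (ω-1)/Real.sqrt ω) *
        Real.sqrt (M S)
        = α₀ * ((m₀:ℝ) - 1) * (Real.sqrt (M S : ℝ) * Real.sqrt (ω-1)) /
          (Real.sqrt m₀ * Real.sqrt ω) := by ring
    rw [heq, div_le_iff₀ hb]
    have hc : (0:ℝ) ≤ α₀ * ((m₀:ℝ) - 1) := by nlinarith
    nlinarith [mul_le_mul_of_nonneg_left hkey hc]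
  have hstep2 : α₀ * ((m₀:ℝ) - 1) * t ≤ α₀ / t * (m S : ℝ) := by
    rw [div_mul_eq_mul_div, le_div_iff₀ ht0]
    have hmS' : (m₀:ℝ) * t ^ 2 - 1 ≤ (m S : ℝ) := by rw [ht2]; exact hmS
    nlinarith [mul_le_mul_of_nonneg_left hmS' hα₀.le, sq_nonneg t]
  rw [hαS]
  exact le_trans hstep1 hstep2
end
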